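/- Define c̃(ρ) = (erf⁻¹(ρ))². Then the elasticity ρ·c̃'(ρ)/c̃(ρ) satisfies lim_{ρ→0⁺} ρ·c̃'(ρ)/c̃(ρ) = 2 and lim_{ρ→1⁻} ρ·c̃'(ρ)/c̃(ρ) = +∞. -/

import Mathlib

open Real Filter Set Topology

/-- The Gaussian error function `erf z = (2/√π) ∫₀^z e^{-t²} dt`. -/
noncomputable def erf (z : ℝ) : ℝ :=
  (2 / Real.sqrt Real.pi) * ∫ t in (0:ℝ)..z, Real.exp (-t ^ 2)

lemma cont_gauss : Continuous fun t : ℝ => Real.exp (-t ^ 2) := by continuity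

lemma sqrt_pi_pos : 0 < Real.sqrt Real.pi := Real.sqrt_pos.2 Real.pi_pos

lemma erf_hasDerivAt (z : ℝ) :
    HasDerivAt erf (2 / Real.sqrt Real.pi * Real.exp (-z ^ 2)) z := by
  have h1 : HasDerivAt (fun u => ∫ t in (0:ℝ)..u, Real.exp (-t ^ 2)) (Real.exp (-z ^ 2)) z :=
    intervalIntegral.integral_hasDerivAt_right
      (cont_gauss.intervalIntegrable _ _)
      (cont_gauss.stronglyMeasurableAtFilter _ _) cont_gauss.continuousAt
  exact h1.const_mul (2 / Real.sqrt Real.pi)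

lemma erf_deriv_pos (z : ℝ) : 0 < 2 / Real.sqrt Real.pi * Real.exp (-z ^ 2) :=
  mul_pos (by positivity) (Real.exp_pos _)

lemma erf_zero : erf 0 = 0 := by simp [erf]

lemma erf_continuous : Continuous erf := by
  have : Differentiable ℝ erf := fun z => (erf_hasDerivAt z).differentiableAt
  exact this.continuous

lemma erf_strictMono : StrictMono erf := by
  apply strictMono_of_deriv_pos
  intro z
  rw [(erf_hasDerivAt z).deriv]
  exact erf_deriv_pos z

lemma tendsto_erf_atTop : Tendsto erf atTop (𝓝 1) := by
  have hint : MeasureTheory.IntegrableOn (fun t : ℝ => Real.exp (-t ^ 2)) (Ioi 0) := by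
    have := (integrable_exp_neg_mul_sq (b := 1) one_pos).integrableOn (s := Ioi (0:ℝ))
    simpa using this
  have h1 := MeasureTheory.intervalIntegral_tendsto_integral_Ioi 0 hint tendsto_id
  have hval : (∫ x in Ioi (0:ℝ), Real.exp (-x ^ 2)) = Real.sqrt Real.pi / 2 := by
    have := integral_gaussian_Ioi 1
    simpa using this
  rw [hval] at h1
  have h2 := h1.const_mul (2 / Real.sqrt Real.pi)
  have : 2 / Real.sqrt Real.pi * (Real.sqrt Real.pi / 2) = 1 := by
    field_simp
  rw [this] at h2
  exact h2.congr fun x => rfl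

/-- The inverse of the Gaussian error function. -/
noncomputable def erfInv : ℝ → ℝ := Function.invFun erf

lemma erf_lt_one (z : ℝ) : erf z < 1 := by
  have h1 : erf z < erf (z + 1) := erf_strictMono (by linarith)
  have h2 : erf (z + 1) ≤ 1 :=
    erf_strictMono.monotone.ge_of_tendsto tendsto_erf_atTop (z + 1)
  linarith

lemma erf_surj {ρ : ℝ} (hρ : ρ ∈ Ioo (0:ℝ) 1) : ∃ x, erf x = ρ := by
  obtain ⟨y, hy⟩ : ∃ y, ρ < erf y := by
    have := tendsto_erf_atTop.eventually (eventually_gt_nhds hρ.2)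
    exact this.exists
  have hy0 : (0:ℝ) < y := by
    by_contra h
    push_neg at h
    have : erf y ≤ erf 0 := erf_strictMono.monotone h
    rw [erf_zero] at this
    linarith [hρ.1]
  have := intermediate_value_Ioo hy0.le (erf_continuous.continuousOn (s := Icc 0 y))
  have hmem : ρ ∈ Ioo (erf 0) (erf y) := by
    rw [erf_zero]; exact ⟨hρ.1, hy⟩
  obtain ⟨x, _, hx⟩ := this hmem
  exact ⟨x, hx⟩

lemma erf_erfInv {ρ : ℝ} (hρ : ρ ∈ Ioo (0:ℝ) 1) : erf (erfInv ρ) = ρ :=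
  Function.invFun_eq (erf_surj hρ)

lemma erfInv_pos {ρ : ℝ} (hρ : ρ ∈ Ioo (0:ℝ) 1) : 0 < erfInv ρ := by
  have h := erf_erfInv hρ
  have : erf 0 < erf (erfInv ρ) := by rw [erf_zero, h]; exact hρ.1
  exact erf_strictMono.lt_iff_lt.1 this

lemma erfInv_gt {ρ b : ℝ} (hρ : ρ ∈ Ioo (0:ℝ) 1) (h : erf b < ρ) : b < erfInv ρ :=
  erf_strictMono.lt_iff_lt.1 (by rw [erf_erfInv hρ]; exact h)

lemma erfInv_lt {ρ b : ℝ} (hρ : ρ ∈ Ioo (0:ℝ) 1) (h : ρ < erf b) : erfInv ρ < b :=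
  erf_strictMono.lt_iff_lt.1 (by rw [erf_erfInv hρ]; exact h)

lemma eventually_Ioo {ρ : ℝ} (hρ : ρ ∈ Ioo (0:ℝ) 1) : ∀ᶠ ρ' in 𝓝 ρ, ρ' ∈ Ioo (0:ℝ) 1 :=
  isOpen_Ioo.eventually_mem hρ

lemma erfInv_continuousAt {ρ : ℝ} (hρ : ρ ∈ Ioo (0:ℝ) 1) : ContinuousAt erfInv ρ := by
  rw [ContinuousAt]
  apply tendsto_order.2
  constructor
  · intro b hb
    have hbρ : erf b < ρ := by
      rw [← erf_erfInv hρ]; exact erf_strictMono hb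
    filter_upwards [eventually_Ioo hρ, eventually_gt_nhds hbρ] with ρ' h1 h2
    exact erfInv_gt h1 h2
  · intro b hb
    have hbρ : ρ < erf b := by
      rw [← erf_erfInv hρ]; exact erf_strictMono hb
    filter_upwards [eventually_Ioo hρ, eventually_lt_nhds hbρ] with ρ' h1 h2
    exact erfInv_lt h1 h2

lemma erfInv_hasDerivAt {ρ : ℝ} (hρ : ρ ∈ Ioo (0:ℝ) 1) :
    HasDerivAt erfInv (2 / Real.sqrt Real.pi * Real.exp (-(erfInv ρ) ^ 2))⁻¹ ρ := by
  apply HasDerivAt.of_local_left_inverse (erfInv_continuousAt hρ)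
    (erf_hasDerivAt (erfInv ρ)) (ne_of_gt (erf_deriv_pos _))
  filter_upwards [eventually_Ioo hρ] with ρ' h using erf_erfInv h

/-- The cost function . -/
noncomputable def ctilde (ρ : ℝ) : ℝ := erfInv ρ ^ 2

lemma elasticity_eq {ρ : ℝ} (hρ : ρ ∈ Ioo (0:ℝ) 1) :
    ρ * deriv ctilde ρ / ctilde ρ =
      Real.sqrt Real.pi * ρ * (Real.exp (erfInv ρ ^ 2) / erfInv ρ) := by
  have hx := erfInv_pos hρ
  have hder : HasDerivAt ctilde
      (↑2 * erfInv ρ ^ (2 - 1) * (2 / Real.sqrt Real.pi * Real.exp (-(erfInv ρ) ^ 2))⁻¹) ρ :=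
    (erfInv_hasDerivAt hρ).pow 2
  rw [hder.deriv]
  rw [ctilde]
  rw [Real.exp_neg]
  have h1 : Real.sqrt Real.pi ≠ 0 := ne_of_gt sqrt_pi_pos
  have h2 : Real.exp (erfInv ρ ^ 2) ≠ 0 := ne_of_gt (Real.exp_pos _)
  field_simp
  ring

lemma tendsto_erfInv_zero : Tendsto erfInv (𝓝[>] (0:ℝ)) (𝓝[>] (0:ℝ)) := by
  have hmem : Ioo (0:ℝ) 1 ∈ 𝓝[>] (0:ℝ) := by
    apply inter_mem_nhdsWithin (t := Iio 1)
    exact Iio_mem_nhds one_pos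
  rw [tendsto_nhdsWithin_iff]
  constructor
  · apply tendsto_order.2
    constructor
    · intro b hb
      filter_upwards [hmem] with ρ h
      exact lt_trans hb (erfInv_pos h)
    · intro b hb
      have hb1 : erf b > 0 := by rw [← erf_zero]; exact erf_strictMono hb
      have : Ioo (0:ℝ) (erf b) ∈ 𝓝[>] (0:ℝ) := by
        apply inter_mem_nhdsWithin (t := Iio (erf b))
        exact Iio_mem_nhds hb1
      filter_upwards [hmem, this] with ρ h1 h2
      exact erfInv_lt h1 h2.2
  · filter_upwards [hmem] with ρ h using erfInv_pos h

lemma tendsto_erfInv_one : Tendsto erfInv (𝓝[<] (1:ℝ)) atTop := by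
  apply tendsto_atTop.2
  intro b
  set b' := max b 1 with hb'
  have hb'0 : (0:ℝ) < b' := lt_of_lt_of_le one_pos (le_max_right _ _)
  have h1 : Ioo (erf b') 1 ∈ 𝓝[<] (1:ℝ) := by
    rw [← Set.Iio_inter_Ioi]
    exact inter_mem_nhdsWithin _ (Ioi_mem_nhds (erf_lt_one b'))
  filter_upwards [h1] with ρ h
  have hρ : ρ ∈ Ioo (0:ℝ) 1 := ⟨lt_trans (by rw [← erf_zero]; exact erf_strictMono hb'0) h.1, h.2⟩
  have := erfInv_gt hρ h.1
  exact le_of_lt (lt_of_le_of_lt (le_max_left b 1) this)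

/-- The elasticity of  tends to  as  and to  as . -/
theorem ctilde_elasticity_limits :
    Filter.Tendsto (fun ρ => ρ * deriv ctilde ρ / ctilde ρ)
      (nhdsWithin 0 (Set.Ioi 0)) (nhds 2) ∧
    Filter.Tendsto (fun ρ => ρ * deriv ctilde ρ / ctilde ρ)
      (nhdsWithin 1 (Set.Iio 1)) Filter.atTop := by
  have hIoo0 : Ioo (0:ℝ) 1 ∈ 𝓝[>] (0:ℝ) := by
    rw [← Set.Ioi_inter_Iio]
    exact inter_mem_nhdsWithin _ (Iio_mem_nhds one_pos)
  constructor
  · -- limit at 0⁺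
    have hslope : Tendsto (fun y => erf y / y) (𝓝[≠] (0:ℝ))
        (𝓝 (2 / Real.sqrt Real.pi)) := by
      have h := (hasDerivAt_iff_tendsto_slope).1 (erf_hasDerivAt 0)
      have : (2:ℝ) / Real.sqrt Real.pi * Real.exp (-(0:ℝ) ^ 2) = 2 / Real.sqrt Real.pi := by
        norm_num
      rw [this] at h
      refine h.congr fun y => ?_
      simp [slope_def_field, erf_zero]
    have hι0 : Tendsto erfInv (𝓝[>] (0:ℝ)) (𝓝 0) :=
      tendsto_erfInv_zero.mono_right nhdsWithin_le_nhds
    have hιne : Tendsto erfInv (𝓝[>] (0:ℝ)) (𝓝[≠] (0:ℝ)) :=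
      tendsto_erfInv_zero.mono_right (nhdsWithin_mono _ fun x hx => ne_of_gt hx)
    have h1 : Tendsto (fun ρ => erf (erfInv ρ) / erfInv ρ) (𝓝[>] (0:ℝ))
        (𝓝 (2 / Real.sqrt Real.pi)) := hslope.comp hιne
    have h2 : Tendsto (fun ρ => Real.exp (erfInv ρ ^ 2)) (𝓝[>] (0:ℝ)) (𝓝 1) := by
      have hc : Tendsto (fun x : ℝ => Real.exp (x ^ 2)) (𝓝 0) (𝓝 1) := by
        have := (Real.continuous_exp.comp (continuous_pow 2)).tendsto 0
        simpa [Function.comp_def] using this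
      exact hc.comp hι0
    have h3 : Tendsto (fun ρ => Real.sqrt Real.pi * Real.exp (erfInv ρ ^ 2) *
        (erf (erfInv ρ) / erfInv ρ)) (𝓝[>] (0:ℝ))
        (𝓝 (Real.sqrt Real.pi * 1 * (2 / Real.sqrt Real.pi))) :=
      (tendsto_const_nhds.mul h2).mul h1
    have hval : Real.sqrt Real.pi * 1 * (2 / Real.sqrt Real.pi) = 2 := by
      field_simp
    rw [hval] at h3
    refine h3.congr' ?_
    filter_upwards [hIoo0] with ρ hρ
    rw [elasticity_eq hρ]
    rw [show erf (erfInv ρ) = ρ from erf_erfInv hρ]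
    ring
  · -- limit at 1⁻
    have hg : Tendsto (fun x : ℝ => Real.exp (x ^ 2) / x) atTop atTop := by
      have hexp : Tendsto (fun x : ℝ => Real.exp x / x) atTop atTop := by
        simpa using Real.tendsto_exp_div_pow_atTop 1
      apply tendsto_atTop_mono' atTop _ hexp
      filter_upwards [eventually_ge_atTop (1:ℝ)] with x hx
      have hx0 : 0 < x := lt_of_lt_of_le one_pos hx
      have hxx : Real.exp x ≤ Real.exp (x ^ 2) := Real.exp_le_exp.mpr (by nlinarith)
      exact (div_le_div_iff_of_pos_right hx0).mpr hxx
    have hcomp : Tendsto (fun ρ => Real.exp (erfInv ρ ^ 2) / erfInv ρ) (𝓝[<] (1:ℝ)) atTop :=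
      hg.comp tendsto_erfInv_one
    have hmul : Tendsto (fun ρ => Real.sqrt Real.pi / 2 *
        (Real.exp (erfInv ρ ^ 2) / erfInv ρ)) (𝓝[<] (1:ℝ)) atTop :=
      hcomp.const_mul_atTop (by positivity)
    apply tendsto_atTop_mono' _ _ hmul
    have hIoo1 : Ioo (1/2 : ℝ) 1 ∈ 𝓝[<] (1:ℝ) := by
      rw [← Set.Iio_inter_Ioi]
      exact inter_mem_nhdsWithin _ (Ioi_mem_nhds (by norm_num))
    filter_upwards [hIoo1] with ρ hρ
    have hρ' : ρ ∈ Ioo (0:ℝ) 1 := ⟨by linarith [hρ.1], hρ.2⟩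
    rw [elasticity_eq hρ']
    have hx := erfInv_pos hρ'
    have hpos : 0 ≤ Real.exp (erfInv ρ ^ 2) / erfInv ρ := by positivity
    have : Real.sqrt Real.pi / 2 ≤ Real.sqrt Real.pi * ρ := by
      nlinarith [sqrt_pi_pos, hρ.1]
    calc Real.sqrt Real.pi / 2 * (Real.exp (erfInv ρ ^ 2) / erfInv ρ)
        ≤ Real.sqrt Real.pi * ρ * (Real.exp (erfInv ρ ^ 2) / erfInv ρ) :=
          mul_le_mul_of_nonneg_right this hpos
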